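/- A graph G contains a graph G' as a minor if and only if there exist a subset U ⊆ V(G) and a surjective map ρ : U → V(G') such that for every subset U' ⊆ V(G') with G'[U'] connected, the induced subgraph G[ρ^{-1}(U')] is connected. -/

import Mathlib

open SimpleGraph Set

lemma reach_of_subset {V : Type*} {G : SimpleGraph V} {A S : Set V} (h : A ⊆ S) {u v : V}
    (hu : u ∈ A) (hv : v ∈ A)
    (hr : (G.induce A).Reachable ⟨u, hu⟩ ⟨v, hv⟩) :
    (G.induce S).Reachable ⟨u, h hu⟩ ⟨v, h hv⟩ :=
  hr.map ⟨Set.inclusion h, fun {_ _} hab => hab⟩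

lemma induce_singleton_connected {W : Type*} (G' : SimpleGraph W) (w : W) :
    (G'.induce {w}).Connected := by
  haveI : Nonempty ({w} : Set W) := ⟨⟨w, rfl⟩⟩
  refine ⟨fun a b => ?_⟩
  have : a = b := Subtype.ext (a.2.trans b.2.symm)
  exact this ▸ Reachable.refl _

lemma induce_pair_connected {W : Type*} {G' : SimpleGraph W} {w w' : W} (h : G'.Adj w w') :
    (G'.induce {w, w'}).Connected := by
  haveI : Nonempty ({w, w'} : Set W) := ⟨⟨w, Or.inl rfl⟩⟩
  refine ⟨fun a b => ?_⟩
  have key : ∀ c : ({w, w'} : Set W), (G'.induce {w, w'}).Reachable ⟨w, Or.inl rfl⟩ c := by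
    rintro ⟨c, (rfl | rfl)⟩
    · exact Reachable.refl _
    · exact Adj.reachable h
  exact (key a).symm.trans (key b)

/-- `H` is a minor of `G` (equivalently: `H` can be obtained from `G` by deleting vertices,
deleting edges and contracting edges): there is a minor model of `H` in `G`, i.e. a family
of nonempty, pairwise disjoint branch sets `B w ⊆ V(G)`, each inducing a connected subgraph
of `G`, such that every edge of `H` is realized by an edge of `G` between the corresponding
branch sets. -/
def IsMinor {W V : Type*} (H : SimpleGraph W) (G : SimpleGraph V) : Prop :=
  ∃ B : W → Set V,
    (∀ w : W, (G.induce (B w)).Connected) ∧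
    (∀ w w' : W, w ≠ w' → Disjoint (B w) (B w')) ∧
    (∀ ⦃w w' : W⦄, H.Adj w w' → ∃ u ∈ B w, ∃ v ∈ B w', G.Adj u v)

/-- A graph `G` contains a graph `G'` as a minor if and only if there exist
a subset `U ⊆ V(G)` and a surjective map `ρ : U → V(G')` such that for every subset
`U' ⊆ V(G')` with `G'[U']` connected, the induced subgraph `G[ρ⁻¹(U')]` is connected. -/
theorem isMinor_iff_exists_connectivity_preserving_map
    {V W : Type*} (G : SimpleGraph V) (G' : SimpleGraph W) :
    IsMinor G' G ↔
      ∃ (U : Set V) (ρ : U → W), Function.Surjective ρ ∧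
        ∀ U' : Set W, (G'.induce U').Connected →
          (G.induce {v : V | ∃ hv : v ∈ U, ρ ⟨v, hv⟩ ∈ U'}).Connected := by
  classical
  constructor
  · rintro ⟨B, hconn, hdisj, hedge⟩
    set U : Set V := ⋃ w, B w with hU
    have mem_of : ∀ {v w}, v ∈ B w → v ∈ U := fun {v w} h => Set.mem_iUnion.mpr ⟨w, h⟩
    let ρ : U → W := fun v => (Set.mem_iUnion.mp v.2).choose
    have hρ : ∀ v : U, (v : V) ∈ B (ρ v) := fun v => (Set.mem_iUnion.mp v.2).choose_spec
    have huniq : ∀ (v : U) (w : W), (v : V) ∈ B w → ρ v = w := by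
      intro v w hw
      by_contra hne
      exact (Set.disjoint_left.mp (hdisj _ _ hne) (hρ v)) hw
    refine ⟨U, ρ, ?_, ?_⟩
    · intro w
      obtain ⟨⟨v, hv⟩⟩ := (hconn w).nonempty
      exact ⟨⟨v, mem_of hv⟩, huniq _ _ hv⟩
    · intro U' hU'
      set S : Set V := {v : V | ∃ hv : v ∈ U, ρ ⟨v, hv⟩ ∈ U'} with hS
      have hBS : ∀ {w}, w ∈ U' → B w ⊆ S := by
        intro w hw v hv
        exact ⟨mem_of hv, by rwa [huniq ⟨v, mem_of hv⟩ w hv]⟩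
      have key : ∀ {a b : U'} (p : (G'.induce U').Walk a b) (u : V) (hu : u ∈ B a.1)
          (v : V) (hv : v ∈ B b.1),
          (G.induce S).Reachable ⟨u, hBS a.2 hu⟩ ⟨v, hBS b.2 hv⟩ := by
        intro a b p
        induction p with
        | @nil a =>
          intro u hu v hv
          exact reach_of_subset (hBS a.2) hu hv
            ((hconn _).preconnected ⟨u, hu⟩ ⟨v, hv⟩)
        | @cons a c b h p ih =>
          intro u hu v hv
          obtain ⟨u', hu', v', hv', huv⟩ := hedge h
          have r1 : (G.induce S).Reachable ⟨u, hBS a.2 hu⟩ ⟨u', hBS a.2 hu'⟩ :=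
            reach_of_subset (hBS a.2) hu hu' ((hconn _).preconnected ⟨u, hu⟩ ⟨u', hu'⟩)
          have r2 : (G.induce S).Adj ⟨u', hBS a.2 hu'⟩ ⟨v', hBS c.2 hv'⟩ := huv
          exact (r1.trans r2.reachable).trans (ih v' hv' v hv)
      have hne : S.Nonempty := by
        obtain ⟨⟨w, hw⟩⟩ := hU'.nonempty
        obtain ⟨⟨v, hv⟩⟩ := (hconn w).nonempty
        exact ⟨v, hBS hw hv⟩
      haveI : Nonempty S := hne.to_subtype
      refine ⟨fun x y => ?_⟩
      obtain ⟨x, hx, hxU'⟩ := x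
      obtain ⟨y, hy, hyU'⟩ := y
      obtain ⟨p⟩ := hU'.preconnected ⟨ρ ⟨x, hx⟩, hxU'⟩ ⟨ρ ⟨y, hy⟩, hyU'⟩
      exact key p x (hρ ⟨x, hx⟩) y (hρ ⟨y, hy⟩)
  · rintro ⟨U, ρ, hsurj, hconn⟩
    refine ⟨fun w => {v : V | ∃ hv : v ∈ U, ρ ⟨v, hv⟩ = w}, ?_, ?_, ?_⟩
    · intro w
      have h := hconn {w} (induce_singleton_connected G' w)
      convert h using 2
      all_goals rfl
    · intro w w' hne
      rw [Set.disjoint_left]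
      rintro v ⟨hv, rfl⟩ ⟨hv', h2⟩
      exact hne h2
    · intro w w' hadj
      have hne := hadj.ne
      have hcS := hconn {w, w'} (induce_pair_connected hadj)
      have key : ∀ {a b : {v : V | ∃ hv : v ∈ U, ρ ⟨v, hv⟩ ∈ ({w, w'} : Set W)}}
          (p : (G.induce {v : V | ∃ hv : v ∈ U, ρ ⟨v, hv⟩ ∈ ({w, w'} : Set W)}).Walk a b),
          (∃ h : (a : V) ∈ U, ρ ⟨a, h⟩ = w) → (∃ h : (b : V) ∈ U, ρ ⟨b, h⟩ = w') →
          ∃ x ∈ {v : V | ∃ hv : v ∈ U, ρ ⟨v, hv⟩ = w},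
            ∃ y ∈ {v : V | ∃ hv : v ∈ U, ρ ⟨v, hv⟩ = w'}, G.Adj x y := by
        intro a b p
        induction p with
        | nil =>
          rintro ⟨h1, e1⟩ ⟨h2, e2⟩
          exact absurd (e1.symm.trans e2) hne
        | @cons a c b h p ih =>
          rintro ⟨h1, e1⟩ hb
          obtain ⟨hc, (ec | ec)⟩ := c.2
          · exact ih ⟨hc, ec⟩ hb
          · exact ⟨a, ⟨h1, e1⟩, c, ⟨hc, ec⟩, h⟩
      obtain ⟨⟨u, huU⟩, hu⟩ := hsurj w
      obtain ⟨⟨v, hvU⟩, hv⟩ := hsurj w'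
      obtain ⟨p⟩ := hcS.preconnected ⟨u, huU, Or.inl hu⟩ ⟨v, hvU, Or.inr hv⟩
      exact key p ⟨huU, hu⟩ ⟨hvU, hv⟩
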